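/- For every integer m ≥ 1 and every complex-valued v ∈ H^2(0, π) with v(0) = v(π) = 0, the inequality ∫₀^π ( (2/m²)|v''|² + 4|v'|² + 2m²|v|² ) dy ≥ 2 ∫₀^π ( (2/m²)|v'|² + 2|v|² ) dy holds. -/

import Mathlib

open MeasureTheory intervalIntegral Filter Topology Complex

lemma hasDerivAt_norm_sq {w : ℝ → ℂ} {w' : ℂ} {y : ℝ} (h : HasDerivAt w w' y) :
    HasDerivAt (fun t => ‖w t‖ ^ 2) (2 * (w' * (starRingEnd ℂ) (w y)).re) y := by
  have h1 : HasDerivAt (fun t => w t * (starRingEnd ℂ) (w t))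
      (w' * (starRingEnd ℂ) (w y) + w y * (starRingEnd ℂ) w') y := h.mul h.star
  have h2 := Complex.reCLM.hasFDerivAt.comp_hasDerivAt y h1
  have e1 : (⇑Complex.reCLM ∘ fun t => w t * (starRingEnd ℂ) (w t)) = fun t => ‖w t‖ ^ 2 := by
    funext t
    simp [Function.comp, Complex.mul_conj, Complex.normSq_eq_norm_sq, ← Complex.ofReal_pow,
      Complex.ofReal_re]
  have e2 : Complex.reCLM (w' * (starRingEnd ℂ) (w y) + w y * (starRingEnd ℂ) w')
      = 2 * (w' * (starRingEnd ℂ) (w y)).re := by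
    simp [Complex.add_re, Complex.mul_re, Complex.conj_re, Complex.conj_im]
    ring
  rw [e1, e2] at h2
  exact h2

lemma wirtinger {v v' : ℝ → ℂ} (h : ∀ y, HasDerivAt v (v' y) y) (hc' : Continuous v')
    (h0 : v 0 = 0) (hpi : v Real.pi = 0)
    (hbdry0 : Tendsto (fun ε => Real.cos ε / Real.sin ε * ‖v ε‖ ^ 2) (𝓝[>] (0:ℝ)) (𝓝 0))
    (hbdrypi : Tendsto (fun ε => Real.cos ε / Real.sin ε * ‖v (Real.pi - ε)‖ ^ 2) (𝓝[>] (0:ℝ)) (𝓝 0)) :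
    ∫ y in (0:ℝ)..Real.pi, ‖v y‖ ^ 2 ≤ ∫ y in (0:ℝ)..Real.pi, ‖v' y‖ ^ 2 := by
  have hcv : Continuous v := by
    rw [continuous_iff_continuousAt]; exact fun y => (h y).continuousAt
  set f : ℝ → ℝ := fun y => ‖v' y‖ ^ 2 - ‖v y‖ ^ 2 with hf
  have hfc : Continuous f := ((hc'.norm.pow 2).sub (hcv.norm.pow 2))
  set ψ : ℝ → ℝ := fun y => Real.cos y / Real.sin y * ‖v y‖ ^ 2 with hψ
  set g : ℝ → ℂ := fun y => v' y - ((Real.cos y / Real.sin y : ℝ) : ℂ) * v y with hg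
  -- key derivative on (0, π)
  have key : ∀ y ∈ Set.Ioo (0:ℝ) Real.pi, HasDerivAt ψ (f y - ‖g y‖ ^ 2) y := by
    intro y hy
    have hsy : Real.sin y ≠ 0 := ne_of_gt (Real.sin_pos_of_pos_of_lt_pi hy.1 hy.2)
    have hcot : HasDerivAt (fun t => Real.cos t / Real.sin t) (-(1 / Real.sin y ^ 2)) y := by
      have := (Real.hasDerivAt_cos y).div (Real.hasDerivAt_sin y) hsy
      refine HasDerivAt.congr_deriv this ?_
      field_simp
      try nlinarith [Real.sin_sq_add_cos_sq y]
    have hF := hasDerivAt_norm_sq (h y)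
    have hd := hcot.mul hF
    refine HasDerivAt.congr_deriv hd ?_
    have hcs : (Real.cos y / Real.sin y) ^ 2 + 1 = 1 / Real.sin y ^ 2 := by
      field_simp
      try nlinarith [Real.sin_sq_add_cos_sq y]
    have hident : -(1 / Real.sin y ^ 2) * ‖v y‖ ^ 2
          + (Real.cos y / Real.sin y) * (2 * (v' y * (starRingEnd ℂ) (v y)).re)
        = (‖v' y‖ ^ 2 - ‖v y‖ ^ 2) - ‖v' y - ((Real.cos y / Real.sin y : ℝ) : ℂ) * v y‖ ^ 2 := by
      rw [← hcs]
      simp only [Complex.sq_norm, Complex.normSq_apply, Complex.mul_re,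
        Complex.conj_re, Complex.conj_im, Complex.mul_im, Complex.sub_re, Complex.sub_im,
        Complex.ofReal_re, Complex.ofReal_im]
      ring
    rw [← hident]
  -- for ε in (0, π/2): ∫_ε^{π-ε} f ≥ ψ(π-ε) - ψ(ε)
  have step : ∀ ε ∈ Set.Ioo (0:ℝ) (Real.pi / 2),
      ψ (Real.pi - ε) - ψ ε ≤ ∫ y in ε..(Real.pi - ε), f y := by
    intro ε hε
    have hle : ε ≤ Real.pi - ε := by linarith [hε.2]
    have hsub : Set.uIcc ε (Real.pi - ε) ⊆ Set.Ioo 0 Real.pi := by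
      rw [Set.uIcc_of_le hle]
      intro x hx
      constructor
      · linarith [hx.1, hε.1]
      · linarith [hx.2, hε.1]
    have hgc : ContinuousOn (fun y => ‖g y‖ ^ 2) (Set.uIcc ε (Real.pi - ε)) := by
      apply ContinuousOn.pow
      apply ContinuousOn.norm
      apply ContinuousOn.sub hc'.continuousOn
      apply ContinuousOn.mul
      · apply Complex.continuous_ofReal.comp_continuousOn
        apply ContinuousOn.div (Real.continuous_cos.continuousOn) (Real.continuous_sin.continuousOn)
        intro x hx
        exact ne_of_gt (Real.sin_pos_of_pos_of_lt_pi (hsub hx).1 (hsub hx).2)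
      · exact hcv.continuousOn
    have hint1 : IntervalIntegrable (fun y => f y - ‖g y‖ ^ 2) volume ε (Real.pi - ε) :=
      ((hfc.continuousOn.sub hgc)).intervalIntegrable
    have heq := intervalIntegral.integral_eq_sub_of_hasDerivAt
      (fun y hy => key y (hsub hy)) hint1
    have hsplit : (∫ y in ε..(Real.pi - ε), (f y - ‖g y‖ ^ 2))
        = (∫ y in ε..(Real.pi - ε), f y) - ∫ y in ε..(Real.pi - ε), ‖g y‖ ^ 2 :=
      intervalIntegral.integral_sub (hfc.intervalIntegrable _ _) hgc.intervalIntegrable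
    have hgnn : 0 ≤ ∫ y in ε..(Real.pi - ε), ‖g y‖ ^ 2 :=
      intervalIntegral.integral_nonneg hle (fun x _ => sq_nonneg _)
    rw [hsplit] at heq
    linarith [heq, hgnn]
  -- limits
  have hπ : (0:ℝ) < Real.pi / 2 := by positivity
  have hIoo : Set.Ioo (0:ℝ) (Real.pi/2) ∈ 𝓝[>] (0:ℝ) :=
    Ioo_mem_nhdsGT_of_mem ⟨le_refl _, hπ⟩
  set P : ℝ → ℝ := fun t => ∫ y in (0:ℝ)..t, f y with hP
  have hPc : Continuous P :=
    intervalIntegral.continuous_primitive (fun a b => hfc.intervalIntegrable a b) 0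
  have hΦ : Tendsto (fun ε => ∫ y in ε..(Real.pi - ε), f y) (𝓝[>] (0:ℝ))
      (𝓝 (∫ y in (0:ℝ)..Real.pi, f y)) := by
    have h1 : Tendsto (fun ε : ℝ => P (Real.pi - ε) - P ε) (𝓝[>] (0:ℝ))
        (𝓝 (P Real.pi - P 0)) := by
      have hcont : Continuous (fun ε : ℝ => P (Real.pi - ε) - P ε) :=
        (hPc.comp (continuous_const.sub continuous_id)).sub hPc
      have h1 := hcont.tendsto 0
      rw [sub_zero] at h1
      exact h1.mono_left nhdsWithin_le_nhds
    have h2 : P 0 = 0 := by simp [hP]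
    rw [h2, sub_zero] at h1
    refine h1.congr ?_
    intro ε
    have := intervalIntegral.integral_add_adjacent_intervals
      (hfc.intervalIntegrable (μ := volume) 0 ε) (hfc.intervalIntegrable (μ := volume) ε (Real.pi - ε))
    simp only [hP]
    linarith [this]
  have hR : Tendsto (fun ε => ψ (Real.pi - ε) - ψ ε) (𝓝[>] (0:ℝ)) (𝓝 0) := by
    have h1 : Tendsto (fun ε => ψ (Real.pi - ε)) (𝓝[>] (0:ℝ)) (𝓝 0) := by
      have := hbdrypi.neg
      rw [neg_zero] at this
      refine this.congr' ?_
      filter_upwards [hIoo] with ε hε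
      simp only [hψ, Real.cos_pi_sub, Real.sin_pi_sub]
      ring
    have := h1.sub hbdry0
    simpa using this
  have hfin : 0 ≤ ∫ y in (0:ℝ)..Real.pi, f y := by
    refine le_of_tendsto_of_tendsto hR hΦ ?_
    filter_upwards [hIoo] with ε hε
    exact step ε hε
  have hsplit2 : (∫ y in (0:ℝ)..Real.pi, f y)
      = (∫ y in (0:ℝ)..Real.pi, ‖v' y‖ ^ 2) - ∫ y in (0:ℝ)..Real.pi, ‖v y‖ ^ 2 :=
    intervalIntegral.integral_sub ((hc'.norm.pow 2).intervalIntegrable 0 Real.pi)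
      ((hcv.norm.pow 2).intervalIntegrable 0 Real.pi)
  rw [hsplit2] at hfin
  linarith
lemma parts {v v' v'' : ℝ → ℂ} (h : ∀ y, HasDerivAt v (v' y) y)
    (h' : ∀ y, HasDerivAt v' (v'' y) y) (hc'' : Continuous v'')
    (h0 : v 0 = 0) (hpi : v Real.pi = 0) :
    2 * ∫ y in (0:ℝ)..Real.pi, ‖v' y‖ ^ 2
      ≤ (∫ y in (0:ℝ)..Real.pi, ‖v'' y‖ ^ 2) + ∫ y in (0:ℝ)..Real.pi, ‖v y‖ ^ 2 := by
  have hcv : Continuous v := by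
    rw [continuous_iff_continuousAt]; exact fun y => (h y).continuousAt
  have hcv' : Continuous v' := by
    rw [continuous_iff_continuousAt]; exact fun y => (h' y).continuousAt
  have hD : ∀ y : ℝ, HasDerivAt (fun t => v' t * (starRingEnd ℂ) (v t))
      (v'' y * (starRingEnd ℂ) (v y) + v' y * (starRingEnd ℂ) (v' y)) y :=
    fun y => (h' y).mul (h y).star
  have hc1 : Continuous (fun y => v'' y * (starRingEnd ℂ) (v y)) :=
    hc''.mul (Complex.continuous_conj.comp hcv)
  have hc2 : Continuous (fun y => v' y * (starRingEnd ℂ) (v' y)) :=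
    hcv'.mul (Complex.continuous_conj.comp hcv')
  have heq := intervalIntegral.integral_eq_sub_of_hasDerivAt (f := fun t => v' t * (starRingEnd ℂ) (v t))
    (a := 0) (b := Real.pi) (fun y _ => hD y) ((hc1.add hc2).intervalIntegrable 0 Real.pi)
  simp only [hpi, h0, map_zero, mul_zero, sub_zero, sub_self] at heq
  have hsplit : (∫ y in (0:ℝ)..Real.pi, (v'' y * (starRingEnd ℂ) (v y) + v' y * (starRingEnd ℂ) (v' y)))
      = (∫ y in (0:ℝ)..Real.pi, v'' y * (starRingEnd ℂ) (v y))
        + ∫ y in (0:ℝ)..Real.pi, v' y * (starRingEnd ℂ) (v' y) :=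
    intervalIntegral.integral_add (hc1.intervalIntegrable 0 Real.pi) (hc2.intervalIntegrable 0 Real.pi)
  have hB : (∫ y in (0:ℝ)..Real.pi, v' y * (starRingEnd ℂ) (v' y))
      = ((∫ y in (0:ℝ)..Real.pi, ‖v' y‖ ^ 2 : ℝ) : ℂ) := by
    rw [← intervalIntegral.integral_ofReal]
    congr 1
    funext y
    rw [Complex.mul_conj]
    simp [Complex.normSq_eq_norm_sq]
  rw [hsplit, hB] at heq
  set B : ℝ := ∫ y in (0:ℝ)..Real.pi, ‖v' y‖ ^ 2 with hBdef
  have hBnn : 0 ≤ B := intervalIntegral.integral_nonneg Real.pi_pos.le (fun x _ => sq_nonneg _)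
  have hI : (∫ y in (0:ℝ)..Real.pi, v'' y * (starRingEnd ℂ) (v y)) = -(B : ℂ) := by
    linear_combination heq
  have hnorm : B ≤ ∫ y in (0:ℝ)..Real.pi, ‖v'' y * (starRingEnd ℂ) (v y)‖ := by
    have := intervalIntegral.norm_integral_le_integral_norm
      (f := fun y => v'' y * (starRingEnd ℂ) (v y)) (μ := volume) (a := 0) (b := Real.pi) Real.pi_pos.le
    rw [hI] at this
    rw [norm_neg] at this
    rwa [Complex.norm_real, Real.norm_of_nonneg hBnn] at this
  have hmono : (∫ y in (0:ℝ)..Real.pi, ‖v'' y * (starRingEnd ℂ) (v y)‖)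
      ≤ ∫ y in (0:ℝ)..Real.pi, (‖v'' y‖ ^ 2 + ‖v y‖ ^ 2) / 2 := by
    apply intervalIntegral.integral_mono_on Real.pi_pos.le
      ((hc1.norm).intervalIntegrable 0 Real.pi)
      ((((hc''.norm.pow 2).add (hcv.norm.pow 2)).div_const 2).intervalIntegrable 0 Real.pi)
    intro x _
    rw [norm_mul]
    have : ‖(starRingEnd ℂ) (v x)‖ = ‖v x‖ := by simp
    rw [this]
    simp only [Pi.add_apply, Pi.pow_apply]
    nlinarith [sq_nonneg (‖v'' x‖ - ‖v x‖)]
  have hsplit2 : (∫ y in (0:ℝ)..Real.pi, (‖v'' y‖ ^ 2 + ‖v y‖ ^ 2) / 2)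
      = ((∫ y in (0:ℝ)..Real.pi, ‖v'' y‖ ^ 2) + ∫ y in (0:ℝ)..Real.pi, ‖v y‖ ^ 2) / 2 := by
    rw [intervalIntegral.integral_div]
    rw [intervalIntegral.integral_add (f := fun y => ‖v'' y‖ ^ 2) (g := fun y => ‖v y‖ ^ 2) ((hc''.norm.pow 2).intervalIntegrable 0 Real.pi)
      ((hcv.norm.pow 2).intervalIntegrable 0 Real.pi)]
  rw [hsplit2] at hmono
  linarith

lemma cot_bdry {w : ℝ → ℂ} {w' : ℝ → ℂ} (h : ∀ y, HasDerivAt w (w' y) y) (h0 : w 0 = 0) :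
    Tendsto (fun ε => Real.cos ε / Real.sin ε * ‖w ε‖ ^ 2) (𝓝[>] (0:ℝ)) (𝓝 0) := by
  have hslope0 : Tendsto (slope w 0) (𝓝[≠] (0:ℝ)) (𝓝 (w' 0)) :=
    hasDerivAt_iff_tendsto_slope.mp (h 0)
  have hslope : Tendsto (fun ε : ℝ => ‖w ε‖ / ε) (𝓝[>] (0:ℝ)) (𝓝 ‖w' 0‖) := by
    have h1 : Tendsto (fun ε : ℝ => ‖slope w 0 ε‖) (𝓝[>] (0:ℝ)) (𝓝 ‖w' 0‖) :=
      (hslope0.mono_left (nhdsWithin_mono _ fun x hx => ne_of_gt hx)).norm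
    refine h1.congr' ?_
    filter_upwards [self_mem_nhdsWithin] with ε (hε : 0 < ε)
    rw [slope_def_module]
    simp [h0, norm_smul, abs_of_pos hε, div_eq_inv_mul]
  -- sin ε / ε → 1
  have hsin : Tendsto (fun ε : ℝ => Real.sin ε / ε) (𝓝[>] (0:ℝ)) (𝓝 1) := by
    have := hasDerivAt_iff_tendsto_slope.mp (Real.hasDerivAt_sin 0)
    rw [Real.cos_zero] at this
    have h2 := this.mono_left (nhdsWithin_mono (0:ℝ) fun x hx => ne_of_gt hx)
    refine h2.congr' ?_
    filter_upwards [self_mem_nhdsWithin] with ε (hε : 0 < ε)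
    rw [slope_def_field]
    simp
  have hinv : Tendsto (fun ε : ℝ => ε / Real.sin ε) (𝓝[>] (0:ℝ)) (𝓝 1) := by
    have := (hsin.inv₀ one_ne_zero)
    simpa using this
  have hcos : Tendsto (fun ε : ℝ => Real.cos ε) (𝓝[>] (0:ℝ)) (𝓝 1) := by
    have := Real.continuous_cos.tendsto 0
    rw [Real.cos_zero] at this
    exact this.mono_left nhdsWithin_le_nhds
  have hnorm : Tendsto (fun ε : ℝ => ‖w ε‖) (𝓝[>] (0:ℝ)) (𝓝 0) := by
    have hc : Continuous w := by
      rw [continuous_iff_continuousAt]; exact fun y => (h y).continuousAt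
    have := (hc.tendsto 0).norm
    rw [h0, norm_zero] at this
    exact this.mono_left nhdsWithin_le_nhds
  have hprod : Tendsto (fun ε : ℝ => Real.cos ε * (ε / Real.sin ε) * (‖w ε‖ / ε * ‖w ε‖))
      (𝓝[>] (0:ℝ)) (𝓝 0) := by
    have := ((hcos.mul hinv).mul (hslope.mul hnorm))
    simpa using this
  refine hprod.congr' ?_
  filter_upwards [Ioo_mem_nhdsGT_of_mem (by constructor <;> [rfl; exact Real.pi_pos] : (0:ℝ) ∈ Set.Ico 0 Real.pi)] with ε hε
  have hε0 : (0:ℝ) < ε := hε.1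
  have hsε : 0 < Real.sin ε := Real.sin_pos_of_pos_of_lt_pi hε0 hε.2
  field_simp


/-- Per-Fourier-mode estimate for the Charney–DeVore energy stability proof. -/
theorem mode_estimate (m : ℕ) (hm : 1 ≤ m) (v v' v'' : ℝ → ℂ)
    (hderiv : ∀ y, HasDerivAt v (v' y) y)
    (hderiv' : ∀ y, HasDerivAt v' (v'' y) y)
    (hv''cont : Continuous v'')
    (hbc0 : v 0 = 0) (hbcpi : v Real.pi = 0) :
    ∫ y in (0:ℝ)..Real.pi,
        ((2 / (m : ℝ) ^ 2) * ‖v'' y‖ ^ 2 + 4 * ‖v' y‖ ^ 2 + 2 * (m : ℝ) ^ 2 * ‖v y‖ ^ 2)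
      ≥ 2 * ∫ y in (0:ℝ)..Real.pi,
        ((2 / (m : ℝ) ^ 2) * ‖v' y‖ ^ 2 + 2 * ‖v y‖ ^ 2) := by
  have hcv : Continuous v := by
    rw [continuous_iff_continuousAt]; exact fun y => (hderiv y).continuousAt
  have hcv' : Continuous v' := by
    rw [continuous_iff_continuousAt]; exact fun y => (hderiv' y).continuousAt
  -- boundary terms
  have hb0 : Tendsto (fun ε => Real.cos ε / Real.sin ε * ‖v ε‖ ^ 2) (𝓝[>] (0:ℝ)) (𝓝 0) :=
    cot_bdry hderiv hbc0
  have hw : ∀ t : ℝ, HasDerivAt (fun s => v (Real.pi - s)) (-v' (Real.pi - t)) t := by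
    intro t
    have h1 : HasDerivAt (fun s : ℝ => Real.pi - s) (-1) t := (hasDerivAt_id t).const_sub Real.pi
    have h2 := (hderiv (Real.pi - t)).scomp t h1
    simp at h2; exact h2
  have hbpi : Tendsto (fun ε => Real.cos ε / Real.sin ε * ‖v (Real.pi - ε)‖ ^ 2)
      (𝓝[>] (0:ℝ)) (𝓝 0) := by
    have := cot_bdry (w := fun s => v (Real.pi - s)) (w' := fun t => -v' (Real.pi - t))
      hw (by simpa using hbcpi)
    exact this
  set A : ℝ := ∫ y in (0:ℝ)..Real.pi, ‖v'' y‖ ^ 2 with hAdef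
  set B : ℝ := ∫ y in (0:ℝ)..Real.pi, ‖v' y‖ ^ 2 with hBdef
  set C : ℝ := ∫ y in (0:ℝ)..Real.pi, ‖v y‖ ^ 2 with hCdef
  have hW : C ≤ B := wirtinger hderiv hcv' hbc0 hbcpi hb0 hbpi
  have hPa : 2 * B ≤ A + C := parts hderiv hderiv' hv''cont hbc0 hbcpi
  have hA : 0 ≤ A := intervalIntegral.integral_nonneg Real.pi_pos.le (fun x _ => sq_nonneg _)
  have hC : 0 ≤ C := intervalIntegral.integral_nonneg Real.pi_pos.le (fun x _ => sq_nonneg _)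
  have hm1 : (1:ℝ) ≤ (m:ℝ) := by exact_mod_cast hm
  set M : ℝ := (m:ℝ) ^ 2 with hMdef
  have hM : (1:ℝ) ≤ M := by nlinarith
  have hMpos : (0:ℝ) < M := by nlinarith
  have i1 : IntervalIntegrable (fun y => (2 / (m:ℝ) ^ 2) * ‖v'' y‖ ^ 2) volume 0 Real.pi :=
    (continuous_const.mul (hv''cont.norm.pow 2)).intervalIntegrable 0 Real.pi
  have i2 : IntervalIntegrable (fun y => 4 * ‖v' y‖ ^ 2) volume 0 Real.pi :=
    (continuous_const.mul (hcv'.norm.pow 2)).intervalIntegrable 0 Real.pi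
  have i3 : IntervalIntegrable (fun y => 2 * (m:ℝ) ^ 2 * ‖v y‖ ^ 2) volume 0 Real.pi :=
    (continuous_const.mul (hcv.norm.pow 2)).intervalIntegrable 0 Real.pi
  have i4 : IntervalIntegrable (fun y => (2 / (m:ℝ) ^ 2) * ‖v' y‖ ^ 2) volume 0 Real.pi :=
    (continuous_const.mul (hcv'.norm.pow 2)).intervalIntegrable 0 Real.pi
  have i5 : IntervalIntegrable (fun y => 2 * ‖v y‖ ^ 2) volume 0 Real.pi :=
    (continuous_const.mul (hcv.norm.pow 2)).intervalIntegrable 0 Real.pi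
  have hLHS : (∫ y in (0:ℝ)..Real.pi,
        ((2 / (m : ℝ) ^ 2) * ‖v'' y‖ ^ 2 + 4 * ‖v' y‖ ^ 2 + 2 * (m : ℝ) ^ 2 * ‖v y‖ ^ 2))
      = (2 / M) * A + 4 * B + (2 * M) * C := by
    rw [intervalIntegral.integral_add (i1.add i2) i3, intervalIntegral.integral_add i1 i2,
      intervalIntegral.integral_const_mul, intervalIntegral.integral_const_mul,
      intervalIntegral.integral_const_mul]
  have hRHS : (∫ y in (0:ℝ)..Real.pi,
        ((2 / (m : ℝ) ^ 2) * ‖v' y‖ ^ 2 + 2 * ‖v y‖ ^ 2))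
      = (2 / M) * B + 2 * C := by
    rw [intervalIntegral.integral_add i4 i5,
      intervalIntegral.integral_const_mul, intervalIntegral.integral_const_mul]
  rw [hLHS, hRHS]
  have hAC : C ≤ A := by linarith
  have hM2 : (1:ℝ) ≤ M ^ 2 := by nlinarith
  have key : 0 ≤ 2 * A + (4 * M - 4) * B + (2 * M ^ 2 - 4 * M) * C := by
    nlinarith [mul_nonneg (sub_nonneg.2 hW) (sub_nonneg.2 hM), mul_nonneg hC (sub_nonneg.2 hM2),
      hAC]
  have expand : (2 / M) * A + 4 * B + (2 * M) * C - 2 * ((2 / M) * B + 2 * C)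
      = (1 / M) * (2 * A + (4 * M - 4) * B + (2 * M ^ 2 - 4 * M) * C) := by
    field_simp
    ring
  rw [ge_iff_le, ← sub_nonneg, expand]
  exact mul_nonneg (by positivity) key
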